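/- Suppose f : ℝ^d → ℝ is L_f-smooth, h : ℝ^d → ℝ is L_h-smooth, g : ℝ^d → ℝ ∪ {+∞} is proper, lower semicontinuous and ρ-weakly convex, and let γ ∈ (0, min{1/ρ, 1/L_f}) and λ > 0. For x ∈ ℝ^d let Y_γ(x) be the unique minimizer over y ∈ ℝ^d of g(y) + (1/(2γ))‖y − (x − γ∇(f+h)(x))‖², and T_γ(x) the unique minimizer over u ∈ ℝ^d of f(u) + (1/(2γ))‖u − ((1 − λ)x + γ∇f(x) + λY_γ(x))‖². Set L₁ := 1 + (1 + γ(L_f + L_h))/(1 − γρ) and L₂ := (1 + γL_f + λL₁)·max{1, γL_f/(1 − γL_f)} + λL₁ + γL_f. Then the map x ↦ x − T_γ(x) is Lipschitz continuous on ℝ^d with constant L₂. -/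

import Mathlib

open scoped RealInnerProductSpace
open InnerProductSpace

/-- `g` is `ρ`-weakly convex: `g + (ρ/2)‖·‖²` is convex (extended-real-valued version). -/
def WeaklyConvexE {E : Type*} [NormedAddCommGroup E] [InnerProductSpace ℝ E]
    (ρ : ℝ) (g : E → EReal) : Prop :=
  ∀ x y : E, ∀ t : ℝ, 0 ≤ t → t ≤ 1 →
    g (t • x + (1 - t) • y) + (((ρ / 2) * ‖t • x + (1 - t) • y‖ ^ 2 : ℝ) : EReal) ≤
      (t : EReal) * (g x + (((ρ / 2) * ‖x‖ ^ 2 : ℝ) : EReal)) +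
        ((1 - t : ℝ) : EReal) * (g y + (((ρ / 2) * ‖y‖ ^ 2 : ℝ) : EReal))

section Aux

variable {E : Type*} [NormedAddCommGroup E] [InnerProductSpace ℝ E]

lemma aux_norm_combo_sq (a b : E) (t : ℝ) :
    ‖t • a + (1 - t) • b‖ ^ 2
      = t * ‖a‖ ^ 2 + (1 - t) * ‖b‖ ^ 2 - t * (1 - t) * ‖a - b‖ ^ 2 := by
  simp only [← real_inner_self_eq_norm_sq]
  simp only [inner_add_left, inner_add_right, inner_sub_left, inner_sub_right,
    real_inner_smul_left, real_inner_smul_right, real_inner_comm a b]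
  ring

lemma aux_four_point (p₁ p₂ w₁ w₂ : E) :
    ‖p₂ - w₁‖ ^ 2 + ‖p₁ - w₂‖ ^ 2 - ‖p₁ - w₁‖ ^ 2 - ‖p₂ - w₂‖ ^ 2
      = 2 * ⟪p₁ - p₂, w₁ - w₂⟫_ℝ := by
  simp only [← real_inner_self_eq_norm_sq]
  simp only [inner_sub_left, inner_sub_right, real_inner_comm p₁ w₁, real_inner_comm p₂ w₁,
    real_inner_comm p₁ w₂, real_inner_comm p₂ w₂]
  ring

/-- one-sided strong-minimality inequality for the prox of a weakly convex function -/
lemma aux_prox_onesided (g : E → EReal) (ρ γ : ℝ)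
    (hgbot : ∀ x, g x ≠ ⊥) (hwc : WeaklyConvexE ρ g)
    (w₁ p₁ p₂ : E) (a b : ℝ) (ha : g p₁ = (a : EReal)) (hb : g p₂ = (b : EReal))
    (h₁ : ∀ u, g p₁ + ((1 / (2 * γ) * ‖p₁ - w₁‖ ^ 2 : ℝ) : EReal)
      ≤ g u + ((1 / (2 * γ) * ‖u - w₁‖ ^ 2 : ℝ) : EReal))
    (t : ℝ) (ht0 : 0 < t) (ht1 : t < 1) :
    a + 1 / (2 * γ) * ‖p₁ - w₁‖ ^ 2
      ≤ b + 1 / (2 * γ) * ‖p₂ - w₁‖ ^ 2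
        - (1 / (2 * γ) - ρ / 2) * (1 - t) * ‖p₂ - p₁‖ ^ 2 := by
  set m := t • p₂ + (1 - t) • p₁ with hm
  have hwc' := hwc p₂ p₁ t ht0.le ht1.le
  rw [ha, hb] at hwc'
  have hRHSeq : (t : EReal) * ((b : EReal) + ((ρ / 2 * ‖p₂‖ ^ 2 : ℝ) : EReal))
      + ((1 - t : ℝ) : EReal) * ((a : EReal) + ((ρ / 2 * ‖p₁‖ ^ 2 : ℝ) : EReal))
      = ((t * (b + ρ / 2 * ‖p₂‖ ^ 2) + (1 - t) * (a + ρ / 2 * ‖p₁‖ ^ 2) : ℝ) : EReal) := by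
    norm_cast
  rw [hRHSeq] at hwc'
  have hmtop : g m ≠ ⊤ := by
    intro hcon
    rw [hcon, EReal.top_add_coe] at hwc'
    exact EReal.coe_ne_top _ (top_le_iff.mp hwc')
  have hmbot := hgbot m
  set c := (g m).toReal with hc
  have hgm : g m = (c : EReal) := (EReal.coe_toReal hmtop hmbot).symm
  rw [hgm, ← EReal.coe_add, EReal.coe_le_coe_iff] at hwc'
  have h₁' := h₁ m
  rw [ha, hgm, ← EReal.coe_add, ← EReal.coe_add, EReal.coe_le_coe_iff] at h₁'
  have hid1 : ‖m - w₁‖ ^ 2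
      = t * ‖p₂ - w₁‖ ^ 2 + (1 - t) * ‖p₁ - w₁‖ ^ 2 - t * (1 - t) * ‖p₂ - p₁‖ ^ 2 := by
    have h : m - w₁ = t • (p₂ - w₁) + (1 - t) • (p₁ - w₁) := by
      rw [hm]; module
    rw [h]
    have := aux_norm_combo_sq (p₂ - w₁) (p₁ - w₁) t
    rw [show (p₂ - w₁) - (p₁ - w₁) = p₂ - p₁ by abel] at this
    exact this
  have hid2 : ‖m‖ ^ 2
      = t * ‖p₂‖ ^ 2 + (1 - t) * ‖p₁‖ ^ 2 - t * (1 - t) * ‖p₂ - p₁‖ ^ 2 := by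
    rw [hm]; exact aux_norm_combo_sq p₂ p₁ t
  rw [hid1] at h₁'
  rw [hid2] at hwc'
  have key : t * (a + 1 / (2 * γ) * ‖p₁ - w₁‖ ^ 2)
      ≤ t * (b + 1 / (2 * γ) * ‖p₂ - w₁‖ ^ 2
        - (1 / (2 * γ) - ρ / 2) * (1 - t) * ‖p₂ - p₁‖ ^ 2) := by
    nlinarith [h₁', hwc']
  exact le_of_mul_le_mul_left key ht0

/-- the prox of a `ρ`-weakly convex function is `(1-γρ)⁻¹`-Lipschitz w.r.t. the base point -/
lemma aux_prox_lip (g : E → EReal) (ρ γ : ℝ) (hγ0 : 0 < γ) (hγρ : γ * ρ < 1)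
    (hgbot : ∀ x, g x ≠ ⊥) (hwc : WeaklyConvexE ρ g)
    (w₁ w₂ p₁ p₂ : E) (hp₁ : g p₁ ≠ ⊤) (hp₂ : g p₂ ≠ ⊤)
    (h₁ : ∀ u, g p₁ + ((1 / (2 * γ) * ‖p₁ - w₁‖ ^ 2 : ℝ) : EReal)
      ≤ g u + ((1 / (2 * γ) * ‖u - w₁‖ ^ 2 : ℝ) : EReal))
    (h₂ : ∀ u, g p₂ + ((1 / (2 * γ) * ‖p₂ - w₂‖ ^ 2 : ℝ) : EReal)
      ≤ g u + ((1 / (2 * γ) * ‖u - w₂‖ ^ 2 : ℝ) : EReal)) :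
    ‖p₁ - p₂‖ ≤ (1 - γ * ρ)⁻¹ * ‖w₁ - w₂‖ := by
  set a := (g p₁).toReal with ha'
  set b := (g p₂).toReal with hb'
  have ha : g p₁ = (a : EReal) := (EReal.coe_toReal hp₁ (hgbot p₁)).symm
  have hb : g p₂ = (b : EReal) := (EReal.coe_toReal hp₂ (hgbot p₂)).symm
  set A := (1 / (2 * γ) - ρ / 2) * ‖p₂ - p₁‖ ^ 2 with hA
  set B := 1 / (2 * γ) * ⟪p₁ - p₂, w₁ - w₂⟫_ℝ with hB
  have hforall : ∀ t : ℝ, 0 < t → t < 1 → A * (1 - t) ≤ B := by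
    intro t ht0 ht1
    have k1 := aux_prox_onesided g ρ γ hgbot hwc w₁ p₁ p₂ a b ha hb h₁ t ht0 ht1
    have k2 := aux_prox_onesided g ρ γ hgbot hwc w₂ p₂ p₁ b a hb ha h₂ t ht0 ht1
    rw [show p₁ - p₂ = -(p₂ - p₁) by abel, norm_neg] at k2
    have hfp := congrArg (fun z => 1 / (2 * γ) * z) (aux_four_point p₁ p₂ w₁ w₂)
    simp only [mul_sub, mul_add] at hfp
    rw [hA, hB]
    nlinarith [k1, k2, hfp]
  have hAB : A ≤ B := by
    by_contra hcon
    push_neg at hcon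
    have h12 := hforall (1/2) (by norm_num) (by norm_num)
    have hApos : 0 < A := by nlinarith
    have ht0 : 0 < (A - B) / (2 * A) := div_pos (by linarith) (by linarith)
    have ht1 : (A - B) / (2 * A) < 1 := by
      rw [div_lt_one (by linarith)]
      nlinarith
    have hfin := hforall _ ht0 ht1
    have heq : A * (1 - (A - B) / (2 * A)) = (A + B) / 2 := by
      field_simp
      ring
    rw [heq] at hfin
    linarith
  have hip : ⟪p₁ - p₂, w₁ - w₂⟫_ℝ ≤ ‖p₁ - p₂‖ * ‖w₁ - w₂‖ := real_inner_le_norm _ _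
  have h1γρ : 0 < 1 - γ * ρ := by linarith
  have hγ' : (0:ℝ) < 2 * γ := by linarith
  have hAB2 : (1 - γ * ρ) * ‖p₁ - p₂‖ ^ 2 ≤ ⟪p₁ - p₂, w₁ - w₂⟫_ℝ := by
    have hmul := mul_le_mul_of_nonneg_left hAB hγ'.le
    rw [hA, hB] at hmul
    rw [show p₂ - p₁ = -(p₁ - p₂) by abel, norm_neg] at hmul
    have e1 : 2 * γ * (1 / (2 * γ) * ⟪p₁ - p₂, w₁ - w₂⟫_ℝ) = ⟪p₁ - p₂, w₁ - w₂⟫_ℝ := by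
      field_simp
    have e2 : 2 * γ * ((1 / (2 * γ) - ρ / 2) * ‖p₁ - p₂‖ ^ 2)
        = (1 - γ * ρ) * ‖p₁ - p₂‖ ^ 2 := by
      field_simp
    rw [e1, e2] at hmul
    exact hmul
  rcases eq_or_lt_of_le (norm_nonneg (p₁ - p₂)) with hz | hpos
  · rw [← hz]
    positivity
  have hkey : (1 - γ * ρ) * ‖p₁ - p₂‖ ^ 2 ≤ ‖p₁ - p₂‖ * ‖w₁ - w₂‖ := le_trans hAB2 hip
  rw [show (1 - γ * ρ)⁻¹ * ‖w₁ - w₂‖ = ‖w₁ - w₂‖ / (1 - γ * ρ) by ring,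
    le_div_iff₀ h1γρ]
  nlinarith [hkey, hpos, mul_pos hpos hpos]

variable [CompleteSpace E]

lemma aux_hasGradientAt_quad (f : E → ℝ) (p : E) (hfd : DifferentiableAt ℝ f p) (c : ℝ) (w : E) :
    HasGradientAt (fun u => f u + c * ‖u - w‖ ^ 2)
      (gradient f p + (2 * c) • (p - w)) p := by
  rw [hasGradientAt_iff_hasFDerivAt]
  have h0 : HasFDerivAt f (toDual ℝ E (gradient f p)) p := hfd.hasGradientAt
  have h1 : HasFDerivAt (fun v : E => v - w) (ContinuousLinearMap.id ℝ E) p :=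
    (hasFDerivAt_id p).sub_const w
  have h2 := (h1.inner ℝ h1).const_mul c
  have h3 := h0.add h2
  have hfun : (fun u => f u + c * ‖u - w‖ ^ 2)
      = fun u => f u + c * ⟪u - w, u - w⟫_ℝ := by
    funext u; rw [real_inner_self_eq_norm_sq]
  rw [hfun]
  refine HasFDerivAt.congr_fderiv h3 ?_
  ext v
  simp [toDual_apply_apply, fderivInnerCLM_apply, inner_add_left, inner_sub_left,
    real_inner_smul_left, real_inner_comm (p - w) v]
  ring

lemma aux_prox_stationary (f : E → ℝ) (hfd : Differentiable ℝ f) (γ : ℝ) (hγ : 0 < γ) (w p : E)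
    (hmin : ∀ u, f p + 1 / (2 * γ) * ‖p - w‖ ^ 2 ≤ f u + 1 / (2 * γ) * ‖u - w‖ ^ 2) :
    w - p = γ • gradient f p := by
  have hg : HasGradientAt (fun u => f u + 1 / (2 * γ) * ‖u - w‖ ^ 2)
      (gradient f p + (2 * (1 / (2 * γ))) • (p - w)) p :=
    aux_hasGradientAt_quad f p (hfd p) _ w
  have hloc : IsLocalMin (fun u => f u + 1 / (2 * γ) * ‖u - w‖ ^ 2) p :=
    Filter.Eventually.of_forall hmin
  have hfz := hloc.fderiv_eq_zero
  have hF : HasFDerivAt (fun u => f u + 1 / (2 * γ) * ‖u - w‖ ^ 2)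
      (toDual ℝ E (gradient f p + (2 * (1 / (2 * γ))) • (p - w))) p := hg
  have := hF.fderiv
  rw [hfz] at this
  have hz : gradient f p + (2 * (1 / (2 * γ))) • (p - w) = 0 := by
    have := congrArg (toDual ℝ E).symm this.symm
    simpa [gradient] using this
  have h2γ : 2 * (1 / (2 * γ)) = γ⁻¹ := by field_simp
  rw [h2γ] at hz
  have := congrArg (fun v => γ • v) hz
  simp only [smul_add, smul_smul, mul_inv_cancel₀ (ne_of_gt hγ), one_smul, smul_zero] at this
  have h4 : γ • gradient f p + (p - w) = 0 := by
    simpa using this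
  have h5 := congrArg (fun v => v + (w - p)) h4
  simp only [zero_add] at h5
  rw [← h5]
  abel

lemma aux_gradient_add (f h : E → ℝ) (x : E) (hf : DifferentiableAt ℝ f x)
    (hh : DifferentiableAt ℝ h x) :
    gradient (fun v => f v + h v) x = gradient f x + gradient h x := by
  have h0 : HasFDerivAt f (toDual ℝ E (gradient f x)) x := hf.hasGradientAt
  have h1 : HasFDerivAt h (toDual ℝ E (gradient h x)) x := hh.hasGradientAt
  have h2 : HasGradientAt (fun v => f v + h v) (gradient f x + gradient h x) x := by
    rw [hasGradientAt_iff_hasFDerivAt, map_add]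
    exact h0.add h1
  exact h2.gradient

lemma aux_convexOn_add_sq (f : E → ℝ) (L : ℝ) (hfd : Differentiable ℝ f)
    (hlip : ∀ x y : E, ‖gradient f x - gradient f y‖ ≤ L * ‖x - y‖) :
    ConvexOn ℝ Set.univ (fun x => f x + L / 2 * ‖x‖ ^ 2) := by
  set F := fun x : E => f x + L / 2 * ‖x‖ ^ 2 with hF
  set G := fun x : E => gradient f x + L • x with hG
  have hgrad : ∀ x : E, HasGradientAt F (G x) x := by
    intro x
    have h := aux_hasGradientAt_quad f x (hfd x) (L / 2) 0
    simp only [sub_zero] at h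
    have : gradient f x + (2 * (L / 2)) • x = G x := by
      rw [hG]
      congr 1
      ring
    rw [this] at h
    exact h
  have hmono : ∀ x y : E, 0 ≤ ⟪G x - G y, x - y⟫_ℝ := by
    intro x y
    have h1 : ⟪G x - G y, x - y⟫_ℝ
        = ⟪gradient f x - gradient f y, x - y⟫_ℝ + L * ‖x - y‖ ^ 2 := by
      rw [hG]
      rw [← real_inner_self_eq_norm_sq]
      simp only [inner_sub_left, inner_add_left, real_inner_smul_left, inner_sub_right]
      ring
    have h2 : |⟪gradient f x - gradient f y, x - y⟫_ℝ|
        ≤ ‖gradient f x - gradient f y‖ * ‖x - y‖ := abs_real_inner_le_norm _ _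
    have h3 := hlip x y
    have h4 : ‖gradient f x - gradient f y‖ * ‖x - y‖ ≤ L * ‖x - y‖ * ‖x - y‖ :=
      mul_le_mul_of_nonneg_right h3 (norm_nonneg _)
    have h5 := abs_le.mp h2
    nlinarith [sq_nonneg ‖x - y‖, h5.1, h5.2]
  constructor
  · exact convex_univ
  intro x _ y _ a b ha hb hab
  set l := fun t : ℝ => y + t • (x - y) with hl
  set φ := fun t : ℝ => F (l t) with hφ
  have hline : ∀ t : ℝ, HasDerivAt l (x - y) t := by
    intro t
    simpa [hl] using ((hasDerivAt_id t).smul_const (x - y)).const_add y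
  have hder : ∀ t : ℝ, HasDerivAt φ ⟪G (l t), x - y⟫_ℝ t := by
    intro t
    have h1 : HasFDerivAt F (toDual ℝ E (G (l t))) (l t) := hgrad (l t)
    have := h1.comp_hasDerivAt t (hline t)
    simp only [toDual_apply_apply] at this
    exact this
  have hφd : Differentiable ℝ φ := fun t => (hder t).differentiableAt
  have hderiv : deriv φ = fun t => ⟪G (l t), x - y⟫_ℝ := by
    funext t; exact (hder t).deriv
  have hmono' : Monotone (deriv φ) := by
    rw [hderiv]
    intro s t hst
    rcases eq_or_lt_of_le hst with rfl | hlt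
    · exact le_rfl
    have key := hmono (l t) (l s)
    have hdiff : l t - l s = (t - s) • (x - y) := by
      rw [hl]; simp [smul_sub, sub_smul]; abel
    rw [hdiff, real_inner_smul_right] at key
    have hts : 0 < t - s := by linarith
    have h2 : 0 ≤ ⟪G (l t) - G (l s), x - y⟫_ℝ := by
      by_contra hcon
      push_neg at hcon
      nlinarith
    rw [inner_sub_left] at h2
    linarith
  have hconv : ConvexOn ℝ Set.univ φ := hmono'.convexOn_univ_of_deriv hφd
  have h1 : a • x + b • y = l a := by
    show a • x + b • y = y + a • (x - y)
    have : b = 1 - a := by linarith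
    rw [this]; module
  have h2 := hconv.2 (Set.mem_univ (1:ℝ)) (Set.mem_univ (0:ℝ)) ha hb hab
  simp only [smul_eq_mul, mul_one, mul_zero, add_zero] at h2
  have hφ1 : φ 1 = F x := by rw [hφ, hl]; norm_num
  have hφ0 : φ 0 = F y := by rw [hφ, hl]; norm_num
  rw [h1]
  simp only [smul_eq_mul]
  calc F (l a) = φ a := rfl
    _ ≤ a * φ 1 + b * φ 0 := h2
    _ = a * F x + b * F y := by rw [hφ1, hφ0]

end Aux

set_option maxHeartbeats 1000000 in
theorem id_sub_T_lipschitz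
    {E : Type*} [NormedAddCommGroup E] [InnerProductSpace ℝ E] [FiniteDimensional ℝ E]
    (f h : E → ℝ) (g : E → EReal) (Lf Lh ρ : ℝ)
    (hLf : 0 ≤ Lf) (hLh : 0 ≤ Lh) (hρ : 0 ≤ ρ)
    (hfd : Differentiable ℝ f)
    (hflip : ∀ x y : E, ‖gradient f x - gradient f y‖ ≤ Lf * ‖x - y‖)
    (hhd : Differentiable ℝ h)
    (hhlip : ∀ x y : E, ‖gradient h x - gradient h y‖ ≤ Lh * ‖x - y‖)
    (hgtop : ∃ x, g x ≠ ⊤) (hgbot : ∀ x, g x ≠ ⊥)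
    (hglsc : LowerSemicontinuous g)
    (hwc : WeaklyConvexE ρ g)
    (γ lam : ℝ) (hγ0 : 0 < γ) (hγρ : γ * ρ < 1) (hγf : γ * Lf < 1) (hlam : 0 < lam)
    (Y T : E → E)
    (hY : ∀ x : E, ∀ w : E,
      g (Y x) + ((1 / (2 * γ) *
        ‖Y x - (x - γ • gradient (fun v => f v + h v) x)‖ ^ 2 : ℝ) : EReal) ≤
      g w + ((1 / (2 * γ) *
        ‖w - (x - γ • gradient (fun v => f v + h v) x)‖ ^ 2 : ℝ) : EReal))
    (hT : ∀ x : E, ∀ u : E,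
      f (T x) + 1 / (2 * γ) *
        ‖T x - ((1 - lam) • x + γ • gradient f x + lam • Y x)‖ ^ 2 ≤
      f u + 1 / (2 * γ) *
        ‖u - ((1 - lam) • x + γ • gradient f x + lam • Y x)‖ ^ 2)
    (L₁ L₂ : ℝ)
    (hL₁ : L₁ = 1 + (1 + γ * (Lf + Lh)) / (1 - γ * ρ))
    (hL₂ : L₂ = (1 + γ * Lf + lam * L₁) * max 1 (γ * Lf / (1 - γ * Lf))
      + lam * L₁ + γ * Lf) :
    ∀ x₁ x₂ : E, ‖(x₁ - T x₁) - (x₂ - T x₂)‖ ≤ L₂ * ‖x₁ - x₂‖ := by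
  intro x₁ x₂
  have h1γρ : (0:ℝ) < 1 - γ * ρ := by linarith
  have h1γf : (0:ℝ) < 1 - γ * Lf := by linarith
  have hsum : ∀ x : E, gradient (fun v => f v + h v) x = gradient f x + gradient h x :=
    fun x => aux_gradient_add f h x (hfd x) (hhd x)
  -- finiteness of g on the range of Y
  obtain ⟨x₀, hx₀⟩ := hgtop
  have hYfin : ∀ x : E, g (Y x) ≠ ⊤ := by
    intro x hcon
    have hx := hY x x₀
    rw [hcon, EReal.top_add_coe] at hx
    set r := (g x₀).toReal with hr
    rw [(EReal.coe_toReal hx₀ (hgbot x₀)).symm, ← EReal.coe_add] at hx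
    exact EReal.coe_ne_top _ (top_le_iff.mp hx)
  -- Y Lipschitz
  have hY₁ := hY x₁
  have hY₂ := hY x₂
  simp only [hsum] at hY₁ hY₂
  set w₁ := x₁ - γ • (gradient f x₁ + gradient h x₁) with hw₁
  set w₂ := x₂ - γ • (gradient f x₂ + gradient h x₂) with hw₂
  have hYlip : ‖Y x₁ - Y x₂‖ ≤ (1 - γ * ρ)⁻¹ * ‖w₁ - w₂‖ :=
    aux_prox_lip g ρ γ hγ0 hγρ hgbot hwc w₁ w₂ (Y x₁) (Y x₂) (hYfin x₁) (hYfin x₂) hY₁ hY₂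
  have hwbound : ‖w₁ - w₂‖ ≤ (1 + γ * (Lf + Lh)) * ‖x₁ - x₂‖ := by
    have e : w₁ - w₂ = (x₁ - x₂)
        - γ • ((gradient f x₁ - gradient f x₂) + (gradient h x₁ - gradient h x₂)) := by
      rw [hw₁, hw₂]; module
    rw [e]
    have t1 := norm_sub_le (x₁ - x₂)
      (γ • ((gradient f x₁ - gradient f x₂) + (gradient h x₁ - gradient h x₂)))
    have t2 : ‖γ • ((gradient f x₁ - gradient f x₂) + (gradient h x₁ - gradient h x₂))‖
        = γ * ‖(gradient f x₁ - gradient f x₂) + (gradient h x₁ - gradient h x₂)‖ := by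
      rw [norm_smul, Real.norm_eq_abs, abs_of_pos hγ0]
    have t3 := norm_add_le (gradient f x₁ - gradient f x₂) (gradient h x₁ - gradient h x₂)
    have t4 := hflip x₁ x₂
    have t5 := hhlip x₁ x₂
    have tX : ‖(gradient f x₁ - gradient f x₂) + (gradient h x₁ - gradient h x₂)‖
        ≤ (Lf + Lh) * ‖x₁ - x₂‖ := by linarith
    have tX2 : γ * ‖(gradient f x₁ - gradient f x₂) + (gradient h x₁ - gradient h x₂)‖
        ≤ γ * ((Lf + Lh) * ‖x₁ - x₂‖) := mul_le_mul_of_nonneg_left tX hγ0.le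
    nlinarith [t1, t2, tX2]
  have hXY : ‖(x₁ - Y x₁) - (x₂ - Y x₂)‖ ≤ L₁ * ‖x₁ - x₂‖ := by
    have e : (x₁ - Y x₁) - (x₂ - Y x₂) = (x₁ - x₂) - (Y x₁ - Y x₂) := by abel
    rw [e]
    have t1 := norm_sub_le (x₁ - x₂) (Y x₁ - Y x₂)
    have t2 : (1 - γ * ρ)⁻¹ * ‖w₁ - w₂‖
        ≤ (1 - γ * ρ)⁻¹ * ((1 + γ * (Lf + Lh)) * ‖x₁ - x₂‖) :=
      mul_le_mul_of_nonneg_left hwbound (inv_nonneg.mpr h1γρ.le)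
    have t3 : (1 - γ * ρ)⁻¹ * ((1 + γ * (Lf + Lh)) * ‖x₁ - x₂‖)
        = ((1 + γ * (Lf + Lh)) / (1 - γ * ρ)) * ‖x₁ - x₂‖ := by ring
    rw [hL₁]
    nlinarith [t1, hYlip, t2, t3]

  -- T Lipschitz
  have hFc := aux_convexOn_add_sq f Lf hfd hflip
  have hwcf : WeaklyConvexE Lf (fun u => ((f u : ℝ) : EReal)) := by
    intro x y t ht0 ht1
    have hb : (0:ℝ) ≤ 1 - t := by linarith
    have hc := hFc.2 (Set.mem_univ x) (Set.mem_univ y) ht0 hb (by ring)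
    simp only [smul_eq_mul] at hc
    dsimp only
    exact_mod_cast hc
  have hT₁ := hT x₁
  have hT₂ := hT x₂
  set v₁ := (1 - lam) • x₁ + γ • gradient f x₁ + lam • Y x₁ with hv₁
  set v₂ := (1 - lam) • x₂ + γ • gradient f x₂ + lam • Y x₂ with hv₂
  have hT₁' : ∀ u, ((f (T x₁) : ℝ) : EReal) + ((1 / (2 * γ) * ‖T x₁ - v₁‖ ^ 2 : ℝ) : EReal)
      ≤ ((f u : ℝ) : EReal) + ((1 / (2 * γ) * ‖u - v₁‖ ^ 2 : ℝ) : EReal) := by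
    intro u; exact_mod_cast hT₁ u
  have hT₂' : ∀ u, ((f (T x₂) : ℝ) : EReal) + ((1 / (2 * γ) * ‖T x₂ - v₂‖ ^ 2 : ℝ) : EReal)
      ≤ ((f u : ℝ) : EReal) + ((1 / (2 * γ) * ‖u - v₂‖ ^ 2 : ℝ) : EReal) := by
    intro u; exact_mod_cast hT₂ u
  have hTlip : ‖T x₁ - T x₂‖ ≤ (1 - γ * Lf)⁻¹ * ‖v₁ - v₂‖ :=
    aux_prox_lip (fun u => ((f u : ℝ) : EReal)) Lf γ hγ0 hγf
      (fun x => EReal.coe_ne_bot _) hwcf v₁ v₂ (T x₁) (T x₂)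
      (EReal.coe_ne_top _) (EReal.coe_ne_top _) hT₁' hT₂'
  have hvbound : ‖v₁ - v₂‖ ≤ (1 + γ * Lf + lam * L₁) * ‖x₁ - x₂‖ := by
    have e : v₁ - v₂ = (x₁ - x₂) + γ • (gradient f x₁ - gradient f x₂)
        - lam • ((x₁ - Y x₁) - (x₂ - Y x₂)) := by
      rw [hv₁, hv₂]; module
    rw [e]
    have t1 := norm_sub_le ((x₁ - x₂) + γ • (gradient f x₁ - gradient f x₂))
      (lam • ((x₁ - Y x₁) - (x₂ - Y x₂)))
    have t2 := norm_add_le (x₁ - x₂) (γ • (gradient f x₁ - gradient f x₂))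
    have t3 : ‖γ • (gradient f x₁ - gradient f x₂)‖
        = γ * ‖gradient f x₁ - gradient f x₂‖ := by
      rw [norm_smul, Real.norm_eq_abs, abs_of_pos hγ0]
    have t4 : ‖lam • ((x₁ - Y x₁) - (x₂ - Y x₂))‖
        = lam * ‖(x₁ - Y x₁) - (x₂ - Y x₂)‖ := by
      rw [norm_smul, Real.norm_eq_abs, abs_of_pos hlam]
    have t5 := hflip x₁ x₂
    have tg : γ * ‖gradient f x₁ - gradient f x₂‖ ≤ γ * (Lf * ‖x₁ - x₂‖) :=
      mul_le_mul_of_nonneg_left t5 hγ0.le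
    have tl : lam * ‖(x₁ - Y x₁) - (x₂ - Y x₂)‖ ≤ lam * (L₁ * ‖x₁ - x₂‖) :=
      mul_le_mul_of_nonneg_left hXY hlam.le
    nlinarith [t1, t2, t3, t4, tg, tl]
  -- stationarity of T
  have hs₁ : v₁ - T x₁ = γ • gradient f (T x₁) :=
    aux_prox_stationary f hfd γ hγ0 v₁ (T x₁) hT₁
  have hs₂ : v₂ - T x₂ = γ • gradient f (T x₂) :=
    aux_prox_stationary f hfd γ hγ0 v₂ (T x₂) hT₂
  -- decomposition
  have hdec : (x₁ - T x₁) - (x₂ - T x₂)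
      = lam • ((x₁ - Y x₁) - (x₂ - Y x₂)) - γ • (gradient f x₁ - gradient f x₂)
        + (γ • gradient f (T x₁) - γ • gradient f (T x₂)) := by
    have hd : (x₁ - T x₁) - (x₂ - T x₂)
        = (x₁ - v₁) - (x₂ - v₂) + ((v₁ - T x₁) - (v₂ - T x₂)) := by abel
    rw [hd, hs₁, hs₂, hv₁, hv₂]
    module
  rw [hdec]
  -- final bounds
  set d := ‖x₁ - x₂‖ with hdd
  have b1 := norm_add_le
    (lam • ((x₁ - Y x₁) - (x₂ - Y x₂)) - γ • (gradient f x₁ - gradient f x₂))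
    (γ • gradient f (T x₁) - γ • gradient f (T x₂))
  have b2 := norm_sub_le (lam • ((x₁ - Y x₁) - (x₂ - Y x₂)))
    (γ • (gradient f x₁ - gradient f x₂))
  have b3 : ‖lam • ((x₁ - Y x₁) - (x₂ - Y x₂))‖ ≤ lam * (L₁ * d) := by
    rw [norm_smul, Real.norm_eq_abs, abs_of_pos hlam]
    exact mul_le_mul_of_nonneg_left hXY hlam.le
  have b4 : ‖γ • (gradient f x₁ - gradient f x₂)‖ ≤ γ * (Lf * d) := by
    rw [norm_smul, Real.norm_eq_abs, abs_of_pos hγ0]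
    exact mul_le_mul_of_nonneg_left (hflip x₁ x₂) hγ0.le
  have b5 : ‖γ • gradient f (T x₁) - γ • gradient f (T x₂)‖
      ≤ γ * (Lf * ‖T x₁ - T x₂‖) := by
    rw [show γ • gradient f (T x₁) - γ • gradient f (T x₂)
        = γ • (gradient f (T x₁) - gradient f (T x₂)) by module]
    rw [norm_smul, Real.norm_eq_abs, abs_of_pos hγ0]
    exact mul_le_mul_of_nonneg_left (hflip (T x₁) (T x₂)) hγ0.le
  -- combine T bounds
  have hL₁0 : (0:ℝ) ≤ L₁ := by
    rw [hL₁]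
    have : (0:ℝ) ≤ (1 + γ * (Lf + Lh)) / (1 - γ * ρ) :=
      div_nonneg (by nlinarith [mul_nonneg hγ0.le (add_nonneg hLf hLh)]) h1γρ.le
    linarith
  have hd0 : (0:ℝ) ≤ d := norm_nonneg _
  have hS0 : (0:ℝ) ≤ (1 + γ * Lf + lam * L₁) := by
    have h2 : 0 ≤ lam * L₁ := mul_nonneg hlam.le hL₁0
    nlinarith [mul_nonneg hγ0.le hLf]
  have hTfull : ‖T x₁ - T x₂‖ ≤ (1 - γ * Lf)⁻¹ * ((1 + γ * Lf + lam * L₁) * d) :=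
    hTlip.trans (mul_le_mul_of_nonneg_left hvbound (inv_nonneg.mpr h1γf.le))
  have b6 : γ * (Lf * ‖T x₁ - T x₂‖)
      ≤ (γ * Lf / (1 - γ * Lf)) * ((1 + γ * Lf + lam * L₁) * d) := by
    have := mul_le_mul_of_nonneg_left hTfull (mul_nonneg hγ0.le hLf)
    calc γ * (Lf * ‖T x₁ - T x₂‖) = (γ * Lf) * ‖T x₁ - T x₂‖ := by ring
      _ ≤ (γ * Lf) * ((1 - γ * Lf)⁻¹ * ((1 + γ * Lf + lam * L₁) * d)) := by
          exact mul_le_mul_of_nonneg_left hTfull (mul_nonneg hγ0.le hLf)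
      _ = (γ * Lf / (1 - γ * Lf)) * ((1 + γ * Lf + lam * L₁) * d) := by ring
  have b7 : (γ * Lf / (1 - γ * Lf)) * ((1 + γ * Lf + lam * L₁) * d)
      ≤ max 1 (γ * Lf / (1 - γ * Lf)) * ((1 + γ * Lf + lam * L₁) * d) :=
    mul_le_mul_of_nonneg_right (le_max_right _ _) (mul_nonneg hS0 hd0)
  have hfinal : L₂ * d = max 1 (γ * Lf / (1 - γ * Lf)) * ((1 + γ * Lf + lam * L₁) * d)
      + lam * (L₁ * d) + γ * (Lf * d) := by
    rw [hL₂]; ring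
  linarith [b1, b2, b3, b4, b5, b6, b7]
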